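/- The quasimetric space (Δ_N, D_f) is both forward and backward complete: (a) if a sequence (P_n) in Δ_N is forward Cauchy, i.e. for every ε > 0 there exists N₀ such that D_f(P_n, P_m) < ε whenever N₀ ≤ n ≤ m, then there exists P ∈ Δ_N with D_f(P, P_n) → 0; (b) if (P_n) is backward Cauchy, i.e. for every ε > 0 there exists N₀ such that D_f(P_m, P_n) < ε whenever N₀ ≤ n ≤ m, then there exists P ∈ Δ_N with D_f(P_n, P) → 0. -/

import Mathlib

open Filter Topology

/-- Membership in the probability simplex Δ_N ⊂ ℝ^{N+1}. -/
def memSimplex {N : ℕ} (P : Fin (N + 1) → ℝ) : Prop :=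
  (∀ i, P i ∈ Set.Icc (0 : ℝ) 1) ∧ ∑ i, P i = 1

/-- The max-type quasimetric D_f(P,Q) = max_i (f(q_i) - f(p_i)). -/
noncomputable def Df {N : ℕ} (f : ℝ → ℝ) (P Q : Fin (N + 1) → ℝ) : ℝ :=
  ⨆ i, (f (Q i) - f (P i))

/-- An "almost decreasing" sequence in [0,1] converges. -/
lemma aux_conv (a : ℕ → ℝ) (hb : ∀ n, a n ∈ Set.Icc (0:ℝ) 1)
    (h : ∀ ε > (0:ℝ), ∃ N₀ : ℕ, ∀ n m : ℕ, N₀ ≤ n → n ≤ m → a m - a n < ε) :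
    ∃ L ∈ Set.Icc (0:ℝ) 1, Tendsto a atTop (𝓝 L) := by
  have hbdd : IsBoundedUnder (· ≥ ·) atTop a :=
    isBoundedUnder_of ⟨0, fun n => (hb n).1⟩
  have hbdd' : IsBoundedUnder (· ≤ ·) atTop a :=
    isBoundedUnder_of ⟨1, fun n => (hb n).2⟩
  set L := liminf a atTop with hL
  have htend : Tendsto a atTop (𝓝 L) := by
    rw [Metric.tendsto_atTop]
    intro ε hε
    obtain ⟨N₀, hN₀⟩ := h (ε/3) (by linarith)
    -- lower bound: eventually L - ε/3 < a n
    have hlow : ∀ᶠ n in atTop, L - ε/3 < a n :=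
      eventually_lt_of_lt_liminf (by linarith) hbdd
    -- find m ≥ N₀ with a m < L + ε/3
    have hfreq : ∃ᶠ n in atTop, a n < L + ε/3 :=
      frequently_lt_of_liminf_lt (hbdd'.isCoboundedUnder_ge) (by linarith)
    obtain ⟨m, hm, hmN₀⟩ := (hfreq.and_eventually (eventually_ge_atTop N₀)).exists
    obtain ⟨M, hM⟩ := eventually_atTop.1 hlow
    refine ⟨max m M, fun n hn => ?_⟩
    have hnm : m ≤ n := le_trans (le_max_left _ _) hn
    have hup : a n < L + 2*ε/3 := by
      have := hN₀ m n hmN₀ hnm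
      linarith
    have hlo : L - ε/3 < a n := hM n (le_trans (le_max_right _ _) hn)
    rw [Real.dist_eq, abs_lt]
    constructor <;> linarith
  exact ⟨L, isClosed_Icc.mem_of_tendsto htend (Filter.Eventually.of_forall hb), htend⟩

/-- Convergence transfers through a strictly monotone map. -/
lemma aux_inv (f : ℝ → ℝ) (hfm : StrictMonoOn f (Set.Icc 0 1))
    (x : ℕ → ℝ) (hx : ∀ n, x n ∈ Set.Icc (0:ℝ) 1) (p : ℝ) (hp : p ∈ Set.Icc (0:ℝ) 1)
    (h : Tendsto (fun n => f (x n)) atTop (𝓝 (f p))) :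
    Tendsto x atTop (𝓝 p) := by
  rw [tendsto_order]
  constructor
  · intro b hb
    rcases lt_or_ge b 0 with hb0 | hb0
    · exact Filter.Eventually.of_forall fun n => lt_of_lt_of_le hb0 (hx n).1
    · have hbmem : b ∈ Set.Icc (0:ℝ) 1 := ⟨hb0, le_trans hb.le hp.2⟩
      have hfb : f b < f p := hfm hbmem hp hb
      have := (tendsto_order.1 h).1 (f b) hfb
      refine this.mono fun n hn => ?_
      by_contra hc
      push_neg at hc
      exact absurd (hfm.monotoneOn (hx n) hbmem hc) (not_le.2 hn)
  · intro b hb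
    rcases le_or_gt b 1 with hb1 | hb1
    swap
    · exact Filter.Eventually.of_forall fun n => lt_of_le_of_lt (hx n).2 hb1
    · have hbmem : b ∈ Set.Icc (0:ℝ) 1 := ⟨le_trans hp.1 hb.le, hb1⟩
      have hfb : f p < f b := hfm hp hbmem hb
      have := (tendsto_order.1 h).2 (f b) hfb
      refine this.mono fun n hn => ?_
      by_contra hc
      push_neg at hc
      exact absurd (hfm.monotoneOn hbmem (hx n) hc) (not_le.2 hn)

/-- A finite sup of sequences each tending to 0 tends to 0. -/
lemma aux_sup {N : ℕ} (g : ℕ → Fin (N+1) → ℝ)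
    (h : ∀ i, Tendsto (fun n => g n i) atTop (𝓝 0)) :
    Tendsto (fun n => ⨆ i, g n i) atTop (𝓝 0) := by
  rw [Metric.tendsto_atTop]
  intro ε hε
  have : ∀ᶠ n in atTop, ∀ i, |g n i| < ε/2 := by
    rw [eventually_all]
    intro i
    have := (Metric.tendsto_atTop.1 (h i)) (ε/2) (by linarith)
    obtain ⟨M, hM⟩ := this
    refine eventually_atTop.2 ⟨M, fun n hn => ?_⟩
    have := hM n hn
    rwa [Real.dist_eq, sub_zero] at this
  obtain ⟨M, hM⟩ := eventually_atTop.1 this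
  refine ⟨M, fun n hn => ?_⟩
  have hub : (⨆ i, g n i) ≤ ε/2 := ciSup_le fun i => (abs_lt.1 (hM n hn i)).2.le
  have hlb : -(ε/2) ≤ (⨆ i, g n i) :=
    le_trans (abs_lt.1 (hM n hn 0)).1.le (le_ciSup (Set.Finite.bddAbove (Set.finite_range _)) 0)
  rw [Real.dist_eq, sub_zero]
  exact lt_of_le_of_lt (abs_le.2 ⟨hlb, hub⟩) (by linarith)

lemma Df_coord_le {N : ℕ} (f : ℝ → ℝ) (P Q : Fin (N+1) → ℝ) (i : Fin (N+1)) :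
    f (Q i) - f (P i) ≤ Df f P Q :=
  le_ciSup (f := fun j => f (Q j) - f (P j)) (Set.Finite.bddAbove (Set.finite_range _)) i

/-- Main construction: coordinatewise convergence of f ∘ Pn gives a limit point
in the simplex with both Df distances tending to 0. -/
lemma build {N : ℕ} (f : ℝ → ℝ)
    (hfc : ContinuousOn f (Set.Icc 0 1))
    (hfm : StrictMonoOn f (Set.Icc 0 1))
    (hf0 : f 0 = 0) (hf1 : f 1 = 1)
    (Pn : ℕ → Fin (N + 1) → ℝ) (hPn : ∀ n, memSimplex (Pn n))
    (L : Fin (N+1) → ℝ) (hLmem : ∀ i, L i ∈ Set.Icc (0:ℝ) 1)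
    (hT : ∀ i, Tendsto (fun n => f (Pn n i)) atTop (𝓝 (L i))) :
    ∃ P : Fin (N + 1) → ℝ, memSimplex P ∧
      Tendsto (fun n => Df f P (Pn n)) atTop (𝓝 0) ∧
      Tendsto (fun n => Df f (Pn n) P) atTop (𝓝 0) := by
  have hsurj : ∀ i, ∃ x ∈ Set.Icc (0:ℝ) 1, f x = L i := by
    intro i
    have h01 : (0:ℝ) ≤ 1 := by norm_num
    have := intermediate_value_Icc h01 hfc
    rw [hf0, hf1] at this
    obtain ⟨x, hx, hfx⟩ := this (hLmem i)
    exact ⟨x, hx, hfx⟩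
  choose P hPmem hPf using hsurj
  have hTc : ∀ i, Tendsto (fun n => Pn n i) atTop (𝓝 (P i)) := by
    intro i
    refine aux_inv f hfm _ (fun n => (hPn n).1 i) _ (hPmem i) ?_
    rw [hPf i]; exact hT i
  have hmem : memSimplex P := by
    refine ⟨hPmem, ?_⟩
    have hsum : Tendsto (fun n => ∑ i, Pn n i) atTop (𝓝 (∑ i, P i)) :=
      tendsto_finset_sum _ fun i _ => hTc i
    have hone : Tendsto (fun n => ∑ i, Pn n i) atTop (𝓝 1) := by
      simpa [(fun n => (hPn n).2 : ∀ n, ∑ i, Pn n i = 1)] using tendsto_const_nhds (x := (1:ℝ))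
    exact tendsto_nhds_unique hsum hone
  refine ⟨P, hmem, ?_, ?_⟩
  · have : Tendsto (fun n => ⨆ i, (f (Pn n i) - f (P i))) atTop (𝓝 0) := by
      refine aux_sup _ fun i => ?_
      have := (hT i).sub (tendsto_const_nhds (x := f (P i)))
      rw [hPf i] at this ⊢
      simpa using this
    exact this
  · have : Tendsto (fun n => ⨆ i, (f (P i) - f (Pn n i))) atTop (𝓝 0) := by
      refine aux_sup _ fun i => ?_
      have := (tendsto_const_nhds (x := f (P i))).sub (hT i)
      rw [hPf i] at this ⊢
      simpa using this
    exact this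

/-- (Δ_N, D_f) is forward and backward complete: every forward
Cauchy sequence forward converges and every backward Cauchy sequence backward
converges to a point of the simplex. -/
theorem stmt_4 {N : ℕ} (f : ℝ → ℝ)
    (hfc : ContinuousOn f (Set.Icc 0 1))
    (hfm : StrictMonoOn f (Set.Icc 0 1))
    (hf0 : f 0 = 0) (hf1 : f 1 = 1)
    (Pn : ℕ → Fin (N + 1) → ℝ) (hPn : ∀ n, memSimplex (Pn n)) :
    ((∀ ε > (0 : ℝ), ∃ N₀ : ℕ, ∀ n m : ℕ, N₀ ≤ n → n ≤ m → Df f (Pn n) (Pn m) < ε) →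
      ∃ P : Fin (N + 1) → ℝ, memSimplex P ∧
        Tendsto (fun n => Df f P (Pn n)) atTop (𝓝 0)) ∧
    ((∀ ε > (0 : ℝ), ∃ N₀ : ℕ, ∀ n m : ℕ, N₀ ≤ n → n ≤ m → Df f (Pn m) (Pn n) < ε) →
      ∃ P : Fin (N + 1) → ℝ, memSimplex P ∧
        Tendsto (fun n => Df f (Pn n) P) atTop (𝓝 0)) := by
  have hfmem : ∀ x ∈ Set.Icc (0:ℝ) 1, f x ∈ Set.Icc (0:ℝ) 1 := by
    intro x hx
    constructor
    · rw [← hf0]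
      exact hfm.monotoneOn (Set.left_mem_Icc.2 (by norm_num)) hx hx.1
    · rw [← hf1]
      exact hfm.monotoneOn hx (Set.right_mem_Icc.2 (by norm_num)) hx.2
  have hamem : ∀ i n, f (Pn n i) ∈ Set.Icc (0:ℝ) 1 := fun i n => hfmem _ ((hPn n).1 i)
  constructor
  · intro hC
    have hconv : ∀ i, ∃ L ∈ Set.Icc (0:ℝ) 1,
        Tendsto (fun n => f (Pn n i)) atTop (𝓝 L) := by
      intro i
      refine aux_conv _ (hamem i) ?_
      intro ε hε
      obtain ⟨N₀, hN₀⟩ := hC ε hε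
      exact ⟨N₀, fun n m hn hnm =>
        lt_of_le_of_lt (Df_coord_le f (Pn n) (Pn m) i) (hN₀ n m hn hnm)⟩
    choose L hLmem hT using hconv
    obtain ⟨P, hmem, h1, _⟩ := build f hfc hfm hf0 hf1 Pn hPn L hLmem hT
    exact ⟨P, hmem, h1⟩
  · intro hC
    have hconv : ∀ i, ∃ L ∈ Set.Icc (0:ℝ) 1,
        Tendsto (fun n => f (Pn n i)) atTop (𝓝 L) := by
      intro i
      have hcau : ∀ ε > (0:ℝ), ∃ N₀ : ℕ, ∀ n m : ℕ, N₀ ≤ n → n ≤ m →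
          (1 - f (Pn m i)) - (1 - f (Pn n i)) < ε := by
        intro ε hε
        obtain ⟨N₀, hN₀⟩ := hC ε hε
        refine ⟨N₀, fun n m hn hnm => ?_⟩
        have := lt_of_le_of_lt (Df_coord_le f (Pn m) (Pn n) i) (hN₀ n m hn hnm)
        linarith
      obtain ⟨L', hL'mem, hL'⟩ := aux_conv (fun n => 1 - f (Pn n i))
        (fun n => ⟨by show 0 ≤ 1 - f (Pn n i); linarith [(hamem i n).2],
          by show 1 - f (Pn n i) ≤ 1; linarith [(hamem i n).1]⟩) hcau
      refine ⟨1 - L', ⟨by linarith [hL'mem.2], by linarith [hL'mem.1]⟩, ?_⟩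
      have := (tendsto_const_nhds (x := (1:ℝ))).sub hL'
      simpa using this
    choose L hLmem hT using hconv
    obtain ⟨P, hmem, _, h2⟩ := build f hfc hfm hf0 hf1 Pn hPn L hLmem hT
    exact ⟨P, hmem, h2⟩
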